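/- Fix σ, σ' > 0 and β, β' ∈ [0,1) with (σ, β) ≠ (σ', β'), and K ≥ 2. Define vectors u, u' ∈ ℂ^{2K+1} by u_k = σ e^{-2πi β k} e^{-2π² σ² k²} and u'_k = σ' e^{-2πi β' k} e^{-2π² σ'² k²} for k = -K,…,K. Then u and u' are linearly independent over ℂ. -/

import Mathlib

open scoped Real

theorem gaussian_samples_independent (K : ℕ) (hK : 2 ≤ K)
    (σ σ' : ℝ) (hσ : 0 < σ) (hσ' : 0 < σ')
    (β β' : ℝ) (hβ : β ∈ Set.Ico (0 : ℝ) 1) (hβ' : β' ∈ Set.Ico (0 : ℝ) 1)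
    (hne : (σ, β) ≠ (σ', β')) :
    ∀ c d : ℂ,
      (∀ k : Fin (2 * K + 1),
        c * ((σ : ℂ) * Complex.exp (-(2 * π * Complex.I) * β * (((k : ℕ) : ℂ) - (K : ℂ))) *
              Complex.exp (-(2 * π ^ 2 * σ ^ 2 : ℝ) * (((k : ℕ) : ℂ) - (K : ℂ)) ^ 2)) +
        d * ((σ' : ℂ) * Complex.exp (-(2 * π * Complex.I) * β' * (((k : ℕ) : ℂ) - (K : ℂ))) *
              Complex.exp (-(2 * π ^ 2 * σ' ^ 2 : ℝ) * (((k : ℕ) : ℂ) - (K : ℂ)) ^ 2)) = 0) →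
      c = 0 ∧ d = 0 := by
  intro c d h
  have h0 := h ⟨K, by omega⟩
  have h1 := h ⟨K + 1, by omega⟩
  simp only [Fin.val_mk] at h0 h1
  have e0 : ((K : ℕ) : ℂ) - (K : ℂ) = 0 := by ring
  have e1 : (((K + 1 : ℕ)) : ℂ) - (K : ℂ) = 1 := by push_cast; ring
  rw [e0] at h0
  rw [e1] at h1
  simp only [mul_zero, ne_eq, OfNat.ofNat_ne_zero, not_false_eq_true, zero_pow,
    Complex.exp_zero, mul_one, one_pow] at h0 h1
  -- h0 : c * σ + d * σ' = 0
  by_cases hc : c = 0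
  · subst hc
    simp only [zero_mul, zero_add, mul_eq_zero] at h0
    rcases h0 with h0 | h0
    · exact ⟨rfl, h0⟩
    · exact absurd h0 (by exact_mod_cast hσ'.ne')
  · exfalso
    have hcs : c * (σ : ℂ) ≠ 0 := mul_ne_zero hc (by exact_mod_cast hσ.ne')
    set E : ℂ := Complex.exp (-(2 * π * Complex.I) * β) *
        Complex.exp ((-(2 * π ^ 2 * σ ^ 2 : ℝ) : ℂ)) with hE
    set E' : ℂ := Complex.exp (-(2 * π * Complex.I) * β') *
        Complex.exp ((-(2 * π ^ 2 * σ' ^ 2 : ℝ) : ℂ)) with hE'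
    have key : c * (σ : ℂ) * (E - E') = 0 := by
      rw [hE, hE']
      linear_combination h1 - E' * h0
    have hEE : E = E' :=
      sub_eq_zero.mp ((mul_eq_zero.mp key).resolve_left hcs)
    -- compare absolute values to get σ = σ'
    have hre : ∀ (b s : ℝ), ‖(Complex.exp (-(2 * π * Complex.I) * b) *
        Complex.exp ((-(2 * π ^ 2 * s ^ 2 : ℝ) : ℂ)))‖ = Real.exp (-(2 * π ^ 2 * s ^ 2)) := by
      intro b s
      rw [norm_mul, Complex.norm_exp, Complex.norm_exp]
      simp [Complex.mul_re, ← Complex.ofReal_pow]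
    have habs : Real.exp (-(2 * π ^ 2 * σ ^ 2)) = Real.exp (-(2 * π ^ 2 * σ' ^ 2)) := by
      rw [← hre β σ, ← hre β' σ', ← hE, ← hE', hEE]
    have hsq : σ ^ 2 = σ' ^ 2 := by
      have h2 := Real.exp_eq_exp.mp habs
      have hπ : (0 : ℝ) < π ^ 2 := by positivity
      nlinarith
    have hs : σ = σ' := by
      have h3 : (σ - σ') * (σ + σ') = 0 := by linear_combination hsq
      rcases mul_eq_zero.mp h3 with h3 | h3
      · linarith
      · linarith
    -- now compare phases
    subst hs
    have hexp : Complex.exp (-(2 * π * Complex.I) * β) =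
        Complex.exp (-(2 * π * Complex.I) * β') :=
      mul_right_cancel₀ (Complex.exp_ne_zero _) hEE
    obtain ⟨n, hn⟩ := Complex.exp_eq_exp_iff_exists_int.mp hexp
    have h2πI : (2 * (π : ℂ) * Complex.I) ≠ 0 := by
      simp [Complex.ext_iff, Real.pi_ne_zero]
    have hz : (2 * (π : ℂ) * Complex.I) * ((β' : ℂ) - (β : ℂ) - (n : ℂ)) = 0 := by
      linear_combination hn
    have hz' : (β' : ℂ) - (β : ℂ) - (n : ℂ) = 0 := (mul_eq_zero.mp hz).resolve_left h2πI
    have hr : β' - β - (n : ℝ) = 0 := by exact_mod_cast hz'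
    obtain ⟨hβ0, hβ1⟩ := hβ
    obtain ⟨hβ'0, hβ'1⟩ := hβ'
    have hn0 : n = 0 := by
      have hlt : (n : ℝ) < 1 := by linarith
      have hgt : (-1 : ℝ) < (n : ℝ) := by linarith
      have : n < 1 := by exact_mod_cast hlt
      have : (-1 : ℤ) < n := by exact_mod_cast hgt
      omega
    rw [hn0] at hr
    simp at hr
    have : β = β' := by linarith
    exact hne (by simp [this])
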